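/- Let X be a connected graph with unit edge lengths and suppose there is a constant M and for each pair of vertices x, y a connected subgraph g_{x,y} containing x and y satisfying the Local axiom (d(x,y) ≤ 1 implies diam g_{x,y} ≤ M) and the Slim-triangles axiom (g_{x,y} ⊆ N_M(g_{y,z} ∪ g_{z,x}) for all x,y,z). Then X is Gromov hyperbolic. -/

import Mathlib

/-- A geodesic walk of length `n` in a graph `G`: a vertex sequence realizing
the graph distance between each pair of its points. -/
def IsGeodesicWalk {V : Type*} (G : SimpleGraph V) (f : ℕ → V) (n : ℕ) : Prop :=
  ∀ i j : ℕ, i ≤ j → j ≤ n → G.dist (f i) (f j) = j - i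

/-- A graph (with unit edge lengths) is Gromov hyperbolic: there is `δ ≥ 0`
such that every geodesic triangle is `δ`-slim — each side lies in the
`δ`-neighborhood of the union of the other two sides. -/
def GraphGromovHyperbolic {V : Type*} (G : SimpleGraph V) : Prop :=
  ∃ δ : ℝ, 0 ≤ δ ∧
    ∀ (k g h : ℕ → V) (nk ng nh : ℕ),
      IsGeodesicWalk G k nk → IsGeodesicWalk G g ng → IsGeodesicWalk G h nh →
      k nk = g 0 → g ng = h 0 → h nh = k 0 →
      (∀ i ≤ nk, ∃ j, (j ≤ ng ∧ (G.dist (k i) (g j) : ℝ) ≤ δ) ∨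
        (j ≤ nh ∧ (G.dist (k i) (h j) : ℝ) ≤ δ)) ∧
      (∀ i ≤ ng, ∃ j, (j ≤ nh ∧ (G.dist (g i) (h j) : ℝ) ≤ δ) ∨
        (j ≤ nk ∧ (G.dist (g i) (k j) : ℝ) ≤ δ)) ∧
      (∀ i ≤ nh, ∃ j, (j ≤ nk ∧ (G.dist (h i) (k j) : ℝ) ≤ δ) ∨
        (j ≤ ng ∧ (G.dist (h i) (g j) : ℝ) ≤ δ))

section MSAux

variable {V : Type*} {G : SimpleGraph V}

/-- Discrete intermediate value theorem for ℕ-valued sequences climbing by ≤ 1. -/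
lemma discreteIVT (t : ℕ) : ∀ (n : ℕ) (d : ℕ → ℕ), (∀ i < n, d (i+1) ≤ d i + 1) →
    d 0 ≤ t → t ≤ d n → ∃ i ≤ n, d i = t := by
  intro n
  induction n with
  | zero => intro d _ h1 h2; exact ⟨0, le_rfl, le_antisymm h1 h2⟩
  | succ n ih =>
    intro d hstep h0 hn
    by_cases h : t ≤ d n
    · obtain ⟨i, hi, hit⟩ := ih d (fun i hi => hstep i (hi.trans (Nat.lt_succ_self n))) h0 h
      exact ⟨i, hi.trans n.le_succ, hit⟩
    · push_neg at h
      have := hstep n (Nat.lt_succ_self n)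
      exact ⟨n+1, le_rfl, by omega⟩

/-- Numeric lemma: exponentials beat linear functions. -/
lemma numAux (m : ℕ) (c : ℕ) (hc : 8*m+12 ≤ c) : 8*m*(c+4) < 2^c := by
  induction c, hc using Nat.le_induction with
  | base =>
    have h1 : m + 1 ≤ 2 ^ m := Nat.lt_two_pow_self
    have h2 : (m+1)^2 ≤ (m+1)^8 := Nat.pow_le_pow_right (Nat.succ_le_succ (Nat.zero_le m)) (by norm_num)
    have h3 : (m+1)^8 ≤ (2^m)^8 := Nat.pow_le_pow_left h1 8
    have h4 : 2^(8*m+12) = (2^m)^8 * 4096 := by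
      rw [pow_add, ← pow_mul]; norm_num; ring_nf
    have h5 : (m+1)^2 = m*m + 2*m + 1 := by ring
    have h6 : m*m + 2*m + 1 ≤ (2^m)^8 := by omega
    have h7 : (m*m + 2*m + 1) * 4096 ≤ (2^m)^8 * 4096 := Nat.mul_le_mul_right _ h6
    rw [h4]
    nlinarith [h7]
  | succ c hc ih =>
    have h1 : 8*m*(c+1+4) ≤ 2 * (8*m*(c+4)) := by nlinarith
    calc 8*m*(c+1+4) ≤ 2 * (8*m*(c+4)) := h1
      _ < 2 * 2^c := by omega
      _ = 2^(c+1) := by ring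

/-- Log lemma: each point of `g x y` is within `m(n+1)` of any geodesic from
`x` to `y` of length at most `2^n`. -/
lemma lemA (hG : G.Connected) (m : ℕ) (g : V → V → Set V)
    (hsymm : ∀ x y, g x y = g y x)
    (hmem : ∀ x y, x ∈ g x y ∧ y ∈ g x y)
    (hlocal' : ∀ x y, G.dist x y ≤ 1 → ∀ u ∈ g x y, ∀ v ∈ g x y, G.dist u v ≤ m)
    (hslim' : ∀ x y z, ∀ w ∈ g x y, ∃ u ∈ g y z ∪ g z x, G.dist w u ≤ m) :
    ∀ (n : ℕ) (f : ℕ → V) (L : ℕ), IsGeodesicWalk G f L → L ≤ 2^n →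
      ∀ x y, f 0 = x → f L = y → ∀ w ∈ g x y, ∃ j ≤ L, G.dist w (f j) ≤ m * (n+1) := by
  intro n
  induction n with
  | zero =>
    intro f L hf hL x y hx hy w hw
    have hd : G.dist x y ≤ 1 := by
      have := hf 0 L (Nat.zero_le _) le_rfl
      rw [hx, hy] at this; omega
    refine ⟨0, Nat.zero_le _, ?_⟩
    rw [hx]
    simpa using hlocal' x y hd w hw x (hmem x y).1
  | succ n ih =>
    intro f L hf hL x y hx hy w hw
    set c := L / 2 with hc
    have hcL : c ≤ L := Nat.div_le_self _ _
    have hc2 : c ≤ 2^n := by have : (2:ℕ)^(n+1) = 2*2^n := by ring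
                             omega
    have hLc2 : L - c ≤ 2^n := by have : (2:ℕ)^(n+1) = 2*2^n := by ring
                                  omega
    obtain ⟨u, hu, hdu⟩ := hslim' x y (f c) w hw
    rcases hu with hu | hu
    · -- u ∈ g y (f c) : second half
      have hgw : IsGeodesicWalk G (fun i => f (c + i)) (L - c) := by
        intro i j hij hj
        show G.dist (f (c+i)) (f (c+j)) = j - i
        have := hf (c+i) (c+j) (by omega) (by omega)
        omega
      have he : f (c + (L - c)) = y := by rw [show c + (L-c) = L from by omega]; exact hy
      have hu' : u ∈ g (f c) y := by rw [hsymm]; exact hu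
      obtain ⟨j, hj, hdj⟩ := ih (fun i => f (c + i)) (L - c) hgw hLc2 (f c) y (by simp) he u hu'
      refine ⟨c + j, by omega, ?_⟩
      calc G.dist w (f (c+j)) ≤ G.dist w u + G.dist u (f (c+j)) := hG.dist_triangle
        _ ≤ m + m * (n+1) := by exact Nat.add_le_add hdu hdj
        _ = m * (n+1+1) := by ring
    · -- u ∈ g (f c) x : first half
      have hgw : IsGeodesicWalk G f c := fun i j hij hj => hf i j hij (hj.trans hcL)
      have hu' : u ∈ g x (f c) := by rw [hsymm]; exact hu
      obtain ⟨j, hj, hdj⟩ := ih f c hgw hc2 x (f c) hx rfl u hu'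
      refine ⟨j, by omega, ?_⟩
      calc G.dist w (f j) ≤ G.dist w u + G.dist u (f j) := hG.dist_triangle
        _ ≤ m + m * (n+1) := Nat.add_le_add hdu hdj
        _ = m * (n+1+1) := by ring

/-- Main bootstrap: each point of `g x y` is within the constant
`R = 2^(8m+12) + 3m` of any geodesic from `x` to `y`. -/
lemma lemB (hG : G.Connected) (m : ℕ) (hm : 1 ≤ m) (g : V → V → Set V)
    (hsymm : ∀ x y, g x y = g y x)
    (hmem : ∀ x y, x ∈ g x y ∧ y ∈ g x y)
    (hlocal' : ∀ x y, G.dist x y ≤ 1 → ∀ u ∈ g x y, ∀ v ∈ g x y, G.dist u v ≤ m)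
    (hslim' : ∀ x y z, ∀ w ∈ g x y, ∃ u ∈ g y z ∪ g z x, G.dist w u ≤ m) :
    ∀ (L : ℕ) (f : ℕ → V), IsGeodesicWalk G f L →
      ∀ x y, f 0 = x → f L = y → ∀ w ∈ g x y,
        ∃ j ≤ L, G.dist w (f j) ≤ 2^(8*m+12) + 3*m := by
  intro L
  induction L using Nat.strong_induction_on with
  | _ L IH =>
  intro f hf x y hx hy w hw
  have hA : 1 ≤ 2^(8*m+12) := Nat.one_le_two_pow
  obtain ⟨t0, ht0mem, hmin0⟩ := Finset.exists_min_image (Finset.range (L+1))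
    (fun j => G.dist w (f j)) ⟨0, by simp⟩
  rw [Finset.mem_range] at ht0mem
  have ht0L : t0 ≤ L := by omega
  have hmin : ∀ j ≤ L, G.dist w (f t0) ≤ G.dist w (f j) := by
    intro j hj
    exact hmin0 j (Finset.mem_range.mpr (by omega))
  set D := G.dist w (f t0) with hD
  refine ⟨t0, ht0L, ?_⟩
  by_contra hcon
  push_neg at hcon
  -- hcon : 2^(8m+12)+3m < D
  by_cases hL0 : L = 0
  · subst hL0
    have hxy : G.dist x y ≤ 1 := by rw [← hx, ← hy]; simp [SimpleGraph.dist_self]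
    have h1 : G.dist w x ≤ m := hlocal' x y hxy w hw x (hmem x y).1
    have h2 : D ≤ G.dist w (f 0) := hmin 0 (by omega)
    rw [hx] at h2
    omega
  have hD1 : 1 ≤ D := by omega
  set α := t0 - 4*D with hα
  set β := min (t0 + 4*D) L with hβ
  obtain ⟨u, hu, hdu⟩ := hslim' x y (f α) w hw
  rcases hu with hu | hu
  · -- u ∈ g y (f α)
    obtain ⟨v, hv, hdv⟩ := hslim' y (f α) (f β) u hu
    have hwv : G.dist w v ≤ 2*m := by
      calc G.dist w v ≤ G.dist w u + G.dist u v := hG.dist_triangle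
        _ ≤ m + m := Nat.add_le_add hdu hdv
        _ = 2*m := by ring
    rcases hv with hv | hv
    · -- v ∈ g (f α) (f β) : the logarithmic middle segment
      have hαβ : α ≤ β := by omega
      have hβL : β ≤ L := by omega
      have hβα8 : β - α ≤ 8*D := by omega
      set c := Nat.log 2 (8*D) with hc
      set n := c + 1 with hn
      have h8D : 8*D < 2^n := Nat.lt_pow_succ_log_self (by norm_num) _
      have hgw3 : IsGeodesicWalk G (fun i => f (α + i)) (β - α) := by
        intro i j hij hj
        show G.dist (f (α+i)) (f (α+j)) = j - i
        have := hf (α+i) (α+j) (by omega) (by omega)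
        omega
      have he2 : (fun i => f (α + i)) (β - α) = f β := by
        show f (α + (β - α)) = f β
        rw [show α + (β - α) = β from by omega]
      obtain ⟨j, hj, hdj⟩ := lemA hG m g hsymm hmem hlocal' hslim' n (fun i => f (α + i))
        (β - α) hgw3 (by omega) (f α) (f β) (by show f (α+0) = f α; rw [Nat.add_zero]) he2 v hv
      have hdj' : G.dist v (f (α + j)) ≤ m * (n+1) := hdj
      have h1 : G.dist w (f (α+j)) ≤ 2*m + m*(n+1) := by
        calc G.dist w (f (α+j)) ≤ G.dist w v + G.dist v (f (α+j)) := hG.dist_triangle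
          _ ≤ 2*m + m*(n+1) := Nat.add_le_add hwv hdj'
      have h2 : D ≤ G.dist w (f (α+j)) := hmin (α+j) (by omega)
      -- numeric contradiction
      have hD8 : 8*D ≠ 0 := by omega
      have hclarge : 8*m+12 ≤ c := by
        rw [hc]
        exact (Nat.le_log_iff_pow_le (by norm_num) hD8).2 (by omega)
      have hnum := numAux m c hclarge
      have hpow : 2^c ≤ 8*D := Nat.pow_log_le_self 2 hD8
      have hmn : m*(n+1) = m*c + 2*m := by rw [hn]; ring
      have h8 : 8*(m*c+4*m) = 8*m*(c+4) := by ring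
      omega
    · -- v ∈ g (f β) y
      by_cases hb : t0 + 4*D < L
      · have hβeq : β = t0 + 4*D := by omega
        have hβ1 : 1 ≤ β := by omega
        have hgw2 : IsGeodesicWalk G (fun i => f (β + i)) (L - β) := by
          intro i j hij hj
          show G.dist (f (β+i)) (f (β+j)) = j - i
          have := hf (β+i) (β+j) (by omega) (by omega)
          omega
        have he2 : (fun i => f (β + i)) (L - β) = y := by
          show f (β + (L - β)) = y
          rw [show β + (L - β) = L from by omega]; exact hy
        obtain ⟨j, hj, hdj⟩ := IH (L - β) (by omega) (fun i => f (β + i)) hgw2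
          (f β) y (by show f (β+0) = f β; rw [Nat.add_zero]) he2 v hv
        have hdj' : G.dist v (f (β + j)) ≤ 2^(8*m+12) + 3*m := hdj
        have h1 : G.dist w (f (β+j)) ≤ 2*m + (2^(8*m+12) + 3*m) := by
          calc G.dist w (f (β+j)) ≤ G.dist w v + G.dist v (f (β+j)) := hG.dist_triangle
            _ ≤ 2*m + (2^(8*m+12) + 3*m) := Nat.add_le_add hwv hdj'
        have h2 : G.dist (f t0) (f (β+j)) = (β+j) - t0 := hf t0 (β+j) (by omega) (by omega)
        have h3 : G.dist (f t0) (f (β+j)) ≤ G.dist (f t0) w + G.dist w (f (β+j)) :=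
          hG.dist_triangle
        have h4 : G.dist (f t0) w = D := by rw [SimpleGraph.dist_comm]
        omega
      · have hβeq : β = L := by omega
        rw [hβeq, hy] at hv
        have hyy : G.dist y y ≤ 1 := by simp [SimpleGraph.dist_self]
        have h1 : G.dist v y ≤ m := hlocal' y y hyy v hv y (hmem y y).1
        have h2 : D ≤ G.dist w (f L) := hmin L le_rfl
        rw [hy] at h2
        have h3 : G.dist w y ≤ G.dist w v + G.dist v y := hG.dist_triangle
        omega
  · -- u ∈ g (f α) x
    by_cases ha : 4*D ≤ t0
    · have hαL : α < L := by omega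
      have hgw1 : IsGeodesicWalk G f α := fun i j hij hj => hf i j hij (by omega)
      have hu' : u ∈ g x (f α) := by rw [hsymm]; exact hu
      obtain ⟨j, hj, hdj⟩ := IH α (by omega) f hgw1 x (f α) hx rfl u hu'
      have h1 : G.dist w (f j) ≤ m + (2^(8*m+12) + 3*m) := by
        calc G.dist w (f j) ≤ G.dist w u + G.dist u (f j) := hG.dist_triangle
          _ ≤ m + (2^(8*m+12) + 3*m) := Nat.add_le_add hdu hdj
      have h2 : G.dist (f j) (f t0) = t0 - j := hf j t0 (by omega) ht0L
      have h3 : G.dist (f j) (f t0) ≤ G.dist (f j) w + G.dist w (f t0) := hG.dist_triangle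
      have h4 : G.dist (f j) w = G.dist w (f j) := SimpleGraph.dist_comm
      omega
    · have hα0 : α = 0 := by omega
      rw [hα0, hx] at hu
      have hxx : G.dist x x ≤ 1 := by simp [SimpleGraph.dist_self]
      have h1 : G.dist u x ≤ m := hlocal' x x hxx u hu x (hmem x x).1
      have h2 : D ≤ G.dist w (f 0) := hmin 0 (by omega)
      rw [hx] at h2
      have h3 : G.dist w x ≤ G.dist w u + G.dist u x := hG.dist_triangle
      omega

/-- Reverse bound: each point of a geodesic from `x` to `y` is within `2R` of
some point of `g x y`. -/
lemma lemC (hG : G.Connected) (m : ℕ) (hm : 1 ≤ m) (g : V → V → Set V)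
    (hsymm : ∀ x y, g x y = g y x)
    (hmem : ∀ x y, x ∈ g x y ∧ y ∈ g x y)
    (hconn : ∀ x y, (G.induce (g x y)).Connected)
    (hlocal' : ∀ x y, G.dist x y ≤ 1 → ∀ u ∈ g x y, ∀ v ∈ g x y, G.dist u v ≤ m)
    (hslim' : ∀ x y z, ∀ w ∈ g x y, ∃ u ∈ g y z ∪ g z x, G.dist w u ≤ m) :
    ∀ (L : ℕ) (f : ℕ → V), IsGeodesicWalk G f L →
      ∀ x y, f 0 = x → f L = y → ∀ t ≤ L,
        ∃ w ∈ g x y, G.dist (f t) w ≤ 2*(2^(8*m+12) + 3*m) := by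
  intro L f hf x y hx hy t ht
  obtain ⟨p⟩ := (hconn x y).preconnected ⟨x, (hmem x y).1⟩ ⟨y, (hmem x y).2⟩
  set q : ℕ → V := fun i => (p.getVert i : V) with hq
  have hqmem : ∀ i, q i ∈ g x y := fun i => (p.getVert i).2
  set d : ℕ → ℕ := fun i => G.dist x (q i) with hd
  have hstep : ∀ i < p.length, d (i+1) ≤ d i + 1 := by
    intro i hi
    have hadj : G.Adj (q i) (q (i+1)) := by
      have := p.adj_getVert_succ hi
      simpa [SimpleGraph.comap_adj] using this
    have hle : G.dist (q i) (q (i+1)) ≤ 1 := by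
      simpa using SimpleGraph.dist_le hadj.toWalk
    calc d (i+1) ≤ G.dist x (q i) + G.dist (q i) (q (i+1)) := hG.dist_triangle
      _ ≤ d i + 1 := Nat.add_le_add le_rfl hle
  have hdistxy : G.dist x y = L := by
    have := hf 0 L (Nat.zero_le _) le_rfl
    rw [hx, hy] at this; omega
  have hd0 : d 0 = 0 := by
    have : q 0 = x := by rw [hq]; simp [SimpleGraph.Walk.getVert_zero]
    rw [hd]; simp [this, SimpleGraph.dist_self]
  have hdlen : d p.length = L := by
    have : q p.length = y := by rw [hq]; simp [SimpleGraph.Walk.getVert_length]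
    rw [hd]; simp [this, hdistxy]
  obtain ⟨i, hi, hit⟩ := discreteIVT t p.length d hstep (by omega) (by omega)
  refine ⟨q i, hqmem i, ?_⟩
  obtain ⟨j, hj, hdj⟩ := lemB hG m hm g hsymm hmem hlocal' hslim' L f hf x y hx hy
    (q i) (hqmem i)
  -- hit : G.dist x (q i) = t ; hdj : G.dist (q i) (f j) ≤ R
  have h1 : G.dist x (f j) = j := by
    have := hf 0 j (Nat.zero_le _) hj
    rw [hx] at this; omega
  have h2 : G.dist x (f j) ≤ G.dist x (q i) + G.dist (q i) (f j) := hG.dist_triangle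
  have h3 : G.dist x (q i) ≤ G.dist x (f j) + G.dist (f j) (q i) := hG.dist_triangle
  have h4 : G.dist (f j) (q i) = G.dist (q i) (f j) := SimpleGraph.dist_comm
  have h5 : G.dist (f t) (f j) = j - t ∨ G.dist (f t) (f j) = t - j := by
    rcases le_total t j with h | h
    · exact Or.inl (hf t j h hj)
    · right; rw [SimpleGraph.dist_comm]; exact hf j t h ht
  have h6 : G.dist (f t) (q i) ≤ G.dist (f t) (f j) + G.dist (f j) (q i) := hG.dist_triangle
  have hit' : G.dist x (q i) = t := hit
  omega

/-- One side of a geodesic triangle lies near the union of the other two. -/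
lemma sideLemma (hG : G.Connected) (m : ℕ) (hm : 1 ≤ m) (g : V → V → Set V)
    (hsymm : ∀ x y, g x y = g y x)
    (hmem : ∀ x y, x ∈ g x y ∧ y ∈ g x y)
    (hconn : ∀ x y, (G.induce (g x y)).Connected)
    (hlocal' : ∀ x y, G.dist x y ≤ 1 → ∀ u ∈ g x y, ∀ v ∈ g x y, G.dist u v ≤ m)
    (hslim' : ∀ x y z, ∀ w ∈ g x y, ∃ u ∈ g y z ∪ g z x, G.dist w u ≤ m)
    (s1 s2 s3 : ℕ → V) (n1 n2 n3 : ℕ)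
    (h1 : IsGeodesicWalk G s1 n1) (h2 : IsGeodesicWalk G s2 n2)
    (h3 : IsGeodesicWalk G s3 n3)
    (e1 : s1 n1 = s2 0) (e2 : s2 n2 = s3 0) (e3 : s3 n3 = s1 0) :
    ∀ i ≤ n1, ∃ j,
      (j ≤ n2 ∧ (G.dist (s1 i) (s2 j) : ℝ) ≤ ((3*(2^(8*m+12)+3*m) + m : ℕ) : ℝ)) ∨
      (j ≤ n3 ∧ (G.dist (s1 i) (s3 j) : ℝ) ≤ ((3*(2^(8*m+12)+3*m) + m : ℕ) : ℝ)) := by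
  intro i hi
  obtain ⟨w, hw, hdw⟩ := lemC hG m hm g hsymm hmem hconn hlocal' hslim' n1 s1 h1
    (s1 0) (s1 n1) rfl rfl i hi
  obtain ⟨u, hu, hdu⟩ := hslim' (s1 0) (s1 n1) (s2 n2) w hw
  rcases hu with hu | hu
  · -- u ∈ g (s1 n1) (s2 n2) = g (s2 0) (s2 n2)
    rw [e1] at hu
    obtain ⟨j, hj, hdj⟩ := lemB hG m hm g hsymm hmem hlocal' hslim' n2 s2 h2
      (s2 0) (s2 n2) rfl rfl u hu
    refine ⟨j, Or.inl ⟨hj, ?_⟩⟩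
    have : G.dist (s1 i) (s2 j) ≤ 3*(2^(8*m+12)+3*m) + m := by
      have t1 : G.dist (s1 i) (s2 j) ≤ G.dist (s1 i) w + G.dist w (s2 j) := hG.dist_triangle
      have t2 : G.dist w (s2 j) ≤ G.dist w u + G.dist u (s2 j) := hG.dist_triangle
      omega
    exact_mod_cast Nat.cast_le.mpr this
  · -- u ∈ g (s2 n2) (s1 0) = g (s3 0) (s3 n3)
    rw [e2, ← e3] at hu
    obtain ⟨j, hj, hdj⟩ := lemB hG m hm g hsymm hmem hlocal' hslim' n3 s3 h3
      (s3 0) (s3 n3) rfl rfl u hu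
    refine ⟨j, Or.inr ⟨hj, ?_⟩⟩
    have : G.dist (s1 i) (s3 j) ≤ 3*(2^(8*m+12)+3*m) + m := by
      have t1 : G.dist (s1 i) (s3 j) ≤ G.dist (s1 i) w + G.dist w (s3 j) := hG.dist_triangle
      have t2 : G.dist w (s3 j) ≤ G.dist w u + G.dist u (s3 j) := hG.dist_triangle
      omega
    exact_mod_cast Nat.cast_le.mpr this

end MSAux

/-- Masur–Schleimer hyperbolicity criterion, Theorem 3.6: let
`X` be a connected graph with unit edge lengths, `M ≥ 0`, and for each
(unordered) pair of vertices `x, y` a connected subgraph `g x y` containing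
`x` and `y`, satisfying the Local axiom (`d(x,y) ≤ 1` implies
`diam (g x y) ≤ M`) and the Slim-triangles axiom
(`g x y ⊆ N_M (g y z ∪ g z x)`).  Then `X` is Gromov hyperbolic. -/
theorem hyperbolicity_criterion {V : Type*} (G : SimpleGraph V)
    (hG : G.Connected) (M : ℝ) (hM : 0 ≤ M)
    (g : V → V → Set V)
    (hsymm : ∀ x y, g x y = g y x)
    (hmem : ∀ x y, x ∈ g x y ∧ y ∈ g x y)
    (hconn : ∀ x y, (G.induce (g x y)).Connected)
    (hlocal : ∀ x y, G.dist x y ≤ 1 →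
      ∀ u ∈ g x y, ∀ v ∈ g x y, (G.dist u v : ℝ) ≤ M)
    (hslim : ∀ x y z, ∀ w ∈ g x y,
      ∃ u ∈ g y z ∪ g z x, (G.dist w u : ℝ) ≤ M) :
    GraphGromovHyperbolic G := by
  set m : ℕ := ⌈M⌉₊ + 1 with hmdef
  have hm : 1 ≤ m := by omega
  have hMm : M ≤ (m : ℝ) := by
    calc M ≤ (⌈M⌉₊ : ℝ) := Nat.le_ceil M
      _ ≤ (m : ℝ) := by exact_mod_cast Nat.le_succ _
  have hlocal' : ∀ x y, G.dist x y ≤ 1 → ∀ u ∈ g x y, ∀ v ∈ g x y, G.dist u v ≤ m := by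
    intro x y hxy u hu v hv
    have := (hlocal x y hxy u hu v hv).trans hMm
    exact_mod_cast this
  have hslim' : ∀ x y z, ∀ w ∈ g x y, ∃ u ∈ g y z ∪ g z x, G.dist w u ≤ m := by
    intro x y z w hw
    obtain ⟨u, hu, hdu⟩ := hslim x y z w hw
    exact ⟨u, hu, by exact_mod_cast hdu.trans hMm⟩
  refine ⟨((3*(2^(8*m+12)+3*m) + m : ℕ) : ℝ), Nat.cast_nonneg _, ?_⟩
  intro k gw hw nk ng nh hk hgw' hhw e1 e2 e3
  exact ⟨sideLemma hG m hm g hsymm hmem hconn hlocal' hslim' k gw hw nk ng nh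
      hk hgw' hhw e1 e2 e3,
    sideLemma hG m hm g hsymm hmem hconn hlocal' hslim' gw hw k ng nh nk
      hgw' hhw hk e2 e3 e1,
    sideLemma hG m hm g hsymm hmem hconn hlocal' hslim' hw k gw nh nk ng
      hhw hk hgw' e3 e1 e2⟩
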